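/- Let H be a Hilbert space and P₊, P₋ bounded projectors (idempotents) on H such that K = P₊ + P₋ − 1 is a compact operator. Then the pair (im P₊, im P₋) is a Fredholm pair: im P₊ ∩ im P₋ is finite dimensional, and im P₊ + im P₋ is closed and of finite codimension. -/

import Mathlib

open Submodule Module

/-- A bounded operator between normed spaces is Fredholm: finite-dimensional kernel,
closed range of finite codimension. -/
def IsFredholmOp {E F : Type*} [NormedAddCommGroup E] [NormedSpace ℂ E]
    [NormedAddCommGroup F] [NormedSpace ℂ F] (T : E →L[ℂ] F) : Prop :=
  FiniteDimensional ℂ (LinearMap.ker (T : E →ₗ[ℂ] F)) ∧ IsClosed (LinearMap.range (T : E →ₗ[ℂ] F) : Set F) ∧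
    FiniteDimensional ℂ (F ⧸ LinearMap.range (T : E →ₗ[ℂ] F))

/-- The index of an operator: dim ker − dim coker. -/
noncomputable def opIndex {E F : Type*} [NormedAddCommGroup E] [NormedSpace ℂ E]
    [NormedAddCommGroup F] [NormedSpace ℂ F] (T : E →L[ℂ] F) : ℤ :=
  (finrank ℂ (LinearMap.ker (T : E →ₗ[ℂ] F)) : ℤ) - finrank ℂ (F ⧸ LinearMap.range (T : E →ₗ[ℂ] F))

/-- A pair of subspaces is Fredholm: finite-dimensional intersection and
closed sum of finite codimension. -/
def IsFredholmPair {H : Type*} [NormedAddCommGroup H] [NormedSpace ℂ H]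
    (A B : Submodule ℂ H) : Prop :=
  FiniteDimensional ℂ ↥(A ⊓ B) ∧ IsClosed ((A ⊔ B : Submodule ℂ H) : Set H) ∧
    FiniteDimensional ℂ (H ⧸ (A ⊔ B))

/-- Index of a Fredholm pair: dim(A ∩ B) − codim(A + B). -/
noncomputable def pairIndex {H : Type*} [NormedAddCommGroup H] [NormedSpace ℂ H]
    (A B : Submodule ℂ H) : ℤ :=
  (finrank ℂ ↥(A ⊓ B) : ℤ) - finrank ℂ (H ⧸ (A ⊔ B))

section FredholmHelpers

set_option linter.unusedSectionVars false

open Metric Set ContinuousLinearMap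

local notation "⟪" x ", " y "⟫" => @inner ℂ _ _ x y

variable {H : Type*} [NormedAddCommGroup H] [InnerProductSpace ℂ H] [CompleteSpace H]


/-- Riesz: a closed subspace fixed pointwise by a compact operator is finite dimensional. -/
lemma aux_findim {K : H →L[ℂ] H} (hK : IsCompactOperator K) (N : Submodule ℂ H)
    (hNc : IsClosed (N : Set H)) (hfix : ∀ x ∈ N, K x = x) : FiniteDimensional ℂ N := by
  obtain ⟨C, hC, hKC⟩ := hK.image_closedBall_subset_compact 1
  have hS : IsCompact ((N : Set H) ∩ Metric.closedBall 0 1) := by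
    refine hC.of_isClosed_subset (hNc.inter Metric.isClosed_closedBall) ?_
    rintro x ⟨hxN, hx1⟩
    exact (hfix x hxN) ▸ hKC ⟨x, hx1, rfl⟩
  have himg : Subtype.val '' (Metric.closedBall (0 : N) 1) = (N : Set H) ∩ Metric.closedBall 0 1 := by
    ext x
    constructor
    · rintro ⟨⟨y, hyN⟩, hy1, rfl⟩
      refine ⟨hyN, ?_⟩
      simpa [Metric.mem_closedBall, dist_eq_norm] using hy1
    · rintro ⟨hxN, hx1⟩
      refine ⟨⟨x, hxN⟩, ?_, rfl⟩
      simpa [Metric.mem_closedBall, dist_eq_norm] using hx1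
  have hball : IsCompact (Metric.closedBall (0 : N) 1) := by
    exact Topology.IsEmbedding.subtypeVal.isCompact_iff.mpr (himg ▸ hS)
  exact FiniteDimensional.of_isCompact_closedBall₀ ℂ one_pos hball

set_option linter.unusedSectionVars false

lemma totallyBounded_of_cauchy_subseq {X : Type*} [UniformSpace X] {s : Set X}
    (h : ∀ u : ℕ → X, (∀ n, u n ∈ s) → ∃ φ : ℕ → ℕ, StrictMono φ ∧ CauchySeq (u ∘ φ)) :
    TotallyBounded s := by
  intro V V_in
  by_contra hV
  obtain ⟨u, u_in, hu⟩ : ∃ u : ℕ → X, (∀ n, u n ∈ s) ∧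
      ∀ n m, m < n → u m ∉ UniformSpace.ball (u n) V := by
    simp only [not_exists, not_and, Set.not_subset, Set.mem_iUnion₂, not_exists, exists_prop] at hV
    obtain ⟨u, hu⟩ := seq_of_forall_finite_exists hV
    exact ⟨u, fun n => (hu n).1, fun n m hmn => (hu n).2 (u m) ⟨m, hmn, rfl⟩⟩
  obtain ⟨φ, hφ, hc⟩ := h u u_in
  obtain ⟨N, hN⟩ : ∃ N, ∀ p q, p ≥ N → q ≥ N → (u (φ p), u (φ q)) ∈ V :=
    hc.mem_entourage V_in
  exact hu (φ (N + 1)) (φ N) (hφ (Nat.lt_add_one N)) (hN (N + 1) N N.le_succ le_rfl)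

/-- Schauder's theorem in Hilbert space: the adjoint of a compact operator is compact. -/
lemma aux_adjoint_compact {K : H →L[ℂ] H} (hK : IsCompactOperator K) :
    IsCompactOperator (ContinuousLinearMap.adjoint K) := by
  set A := ContinuousLinearMap.adjoint K with hA
  have key : TotallyBounded (⇑A '' Metric.closedBall 0 1) := by
    apply totallyBounded_of_cauchy_subseq
    intro u hu
    choose x hx hxA using hu
    have hKA : IsCompactOperator ⇑(K ∘L A) := by
      have : ⇑(K ∘L A) = ⇑K ∘ ⇑A := by ext z; simp
      rw [this]; exact hK.comp_clm A
    obtain ⟨C, hC, hKC⟩ := hKA.image_closedBall_subset_compact 1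
    have hmem : ∀ n, (K ∘L A) (x n) ∈ C := fun n => hKC ⟨x n, hx n, rfl⟩
    obtain ⟨p, -, φ, hφ, hconv⟩ := hC.isSeqCompact hmem
    refine ⟨φ, hφ, ?_⟩
    have hcau : CauchySeq (fun n => (K ∘L A) (x (φ n))) := hconv.cauchySeq
    rw [Metric.cauchySeq_iff] at hcau ⊢
    intro ε hε
    obtain ⟨N, hN⟩ := hcau (ε ^ 2 / 4) (by positivity)
    refine ⟨N, fun m hm n hn => ?_⟩
    have hd : dist ((u ∘ φ) m) ((u ∘ φ) n) = ‖A (x (φ m) - x (φ n))‖ := by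
      simp only [Function.comp_apply, ← hxA, dist_eq_norm, map_sub]
    set d := x (φ m) - x (φ n) with hdd
    have h1 : ‖A d‖ ^ 2 = RCLike.re ⟪A d, A d⟫ := by
      rw [inner_self_eq_norm_sq]
    have h2 : ⟪A d, A d⟫ = ⟪d, K (A d)⟫ := ContinuousLinearMap.adjoint_inner_left K (A d) d
    have h3 : ‖A d‖ ^ 2 ≤ ‖d‖ * ‖K (A d)‖ := by
      rw [h1, h2]
      exact le_trans (RCLike.re_le_norm _) (norm_inner_le_norm _ _)
    have hdle : ‖d‖ ≤ 2 := by
      have h1' := hx (φ m); have h2' := hx (φ n)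
      simp only [Metric.mem_closedBall, dist_zero_right] at h1' h2'
      calc ‖d‖ ≤ ‖x (φ m)‖ + ‖x (φ n)‖ := norm_sub_le _ _
        _ ≤ 2 := by linarith
    have hKAd : ‖K (A d)‖ < ε ^ 2 / 4 := by
      have := hN m hm n hn
      rw [dist_eq_norm] at this
      simpa [hdd, map_sub] using this
    have hsq : ‖A d‖ ^ 2 < ε ^ 2 := by
      calc ‖A d‖ ^ 2 ≤ ‖d‖ * ‖K (A d)‖ := h3
        _ ≤ 2 * ‖K (A d)‖ := by
            exact mul_le_mul_of_nonneg_right hdle (norm_nonneg _)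
        _ < 2 * (ε ^ 2 / 4) := by linarith [hKAd]
        _ ≤ ε ^ 2 := by nlinarith [sq_nonneg ε]
    rw [hd]
    exact lt_of_pow_lt_pow_left₀ 2 (le_of_lt hε) hsq
  have hclos : IsCompact (closure (⇑A '' Metric.closedBall 0 1)) :=
    TotallyBounded.isCompact_of_isClosed key.closure isClosed_closure
  exact (isCompactOperator_iff_exists_mem_nhds_isCompact_closure_image ⇑A).mpr
    ⟨Metric.closedBall 0 1, Metric.closedBall_mem_nhds _ one_pos, hclos⟩

/-- Riesz: `1 + K` has closed range for compact `K`. -/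
lemma aux_range_closed {K : H →L[ℂ] H} (hK : IsCompactOperator K) :
    IsClosed ((LinearMap.range (((1 : H →L[ℂ] H) + K : H →L[ℂ] H) : H →ₗ[ℂ] H) : Submodule ℂ H) : Set H) := by
  set T : H →L[ℂ] H := 1 + K with hT
  have hTapp : ∀ x, T x = x + K x := fun x => rfl
  set N := LinearMap.ker (T : H →ₗ[ℂ] H) with hN
  have hNc : IsClosed (N : Set H) := ContinuousLinearMap.isClosed_ker T
  have hNfd : FiniteDimensional ℂ N := by
    refine aux_findim (K := -K) (by simpa using hK.neg) N hNc ?_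
    intro x hx
    have hxk : x + K x = 0 := hx
    have : K x = -x := eq_neg_of_add_eq_zero_right hxk
    simp only [ContinuousLinearMap.neg_apply, this, neg_neg]
  haveI : CompleteSpace N := FiniteDimensional.complete ℂ N
  set M := Nᗮ with hM
  have hMc : IsClosed (M : Set H) := N.isClosed_orthogonal
  haveI : CompleteSpace M := hMc.completeSpace_coe
  -- the key coercivity estimate on M
  have key : ∃ c : ℝ, 0 < c ∧ ∀ x ∈ M, c * ‖x‖ ≤ ‖T x‖ := by
    by_contra hcon
    push_neg at hcon
    have hseq : ∀ n : ℕ, ∃ u : H, u ∈ M ∧ ‖u‖ = 1 ∧ ‖T u‖ < 1 / (n + 1) := by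
      intro n
      obtain ⟨x, hxM, hxlt⟩ := hcon (1 / (n + 1)) (by positivity)
      have hx0 : x ≠ 0 := by
        rintro rfl
        simp at hxlt
      have hxpos : 0 < ‖x‖ := norm_pos_iff.mpr hx0
      refine ⟨(‖x‖ : ℂ)⁻¹ • x, M.smul_mem _ hxM, ?_, ?_⟩
      · rw [norm_smul, norm_inv, Complex.norm_real, norm_norm,
          inv_mul_cancel₀ hxpos.ne']
      · rw [map_smul, norm_smul, norm_inv, Complex.norm_real, norm_norm]
        calc ‖x‖⁻¹ * ‖T x‖ < ‖x‖⁻¹ * (1 / (n + 1) * ‖x‖) :=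
              mul_lt_mul_of_pos_left hxlt (by positivity)
          _ = 1 / (n + 1) := by field_simp
    choose u huM hu1 huT using hseq
    obtain ⟨C, hC, hKC⟩ := hK.image_closedBall_subset_compact 1
    have hmem : ∀ n, K (u n) ∈ C := fun n => hKC ⟨u n, by simp [hu1 n], rfl⟩
    obtain ⟨p, -, φ, hφ, hconv⟩ := hC.isSeqCompact hmem
    have hTu : Filter.Tendsto (fun n => T (u (φ n))) Filter.atTop (nhds 0) := by
      refine squeeze_zero_norm (fun n => ?_) tendsto_one_div_add_atTop_nhds_zero_nat
      have h1 : ((n : ℝ) + 1) ≤ (φ n : ℝ) + 1 := by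
        have h2 : n ≤ φ n := hφ.le_apply
        push_cast
        linarith [(Nat.cast_le (α := ℝ)).mpr h2]
      exact (huT (φ n)).le.trans (one_div_le_one_div_of_le (by positivity) h1)
    have huconv : Filter.Tendsto (fun n => u (φ n)) Filter.atTop (nhds (0 - p)) := by
      have : (fun n => u (φ n)) = fun n => T (u (φ n)) - K (u (φ n)) := by
        ext n; rw [hTapp]; abel
      rw [this]
      exact hTu.sub hconv
    set z := (0 : H) - p with hz
    have hzM : z ∈ M := hMc.mem_of_tendsto huconv (Filter.Eventually.of_forall fun n => huM (φ n))
    have hz1 : ‖z‖ = 1 := by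
      have h1 : Filter.Tendsto (fun n => ‖u (φ n)‖) Filter.atTop (nhds ‖z‖) := huconv.norm
      have h2 : Filter.Tendsto (fun n => ‖u (φ n)‖) Filter.atTop (nhds 1) := by
        simpa [hu1] using tendsto_const_nhds (α := ℝ) (x := (1:ℝ))
      exact tendsto_nhds_unique h1 h2
    have hzN : z ∈ N := by
      have h1 : Filter.Tendsto (fun n => T (u (φ n))) Filter.atTop (nhds (T z)) :=
        (T.continuous.tendsto z).comp huconv
      have : T z = 0 := tendsto_nhds_unique h1 hTu
      exact this
    have : z = 0 := (Submodule.disjoint_def.mp N.orthogonal_disjoint) z hzN hzM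
    rw [this] at hz1; norm_num at hz1
  obtain ⟨c, hc, hcb⟩ := key
  set S : M →L[ℂ] H := T.comp M.subtypeL with hS
  have hanti : AntilipschitzWith (⟨c, hc.le⟩ : NNReal)⁻¹ ⇑S := by
    apply ContinuousLinearMap.antilipschitz_of_bound
    intro x
    have := hcb x x.2
    have hx : ‖(x : H)‖ = ‖x‖ := rfl
    have hSx : ‖S x‖ = ‖T (x : H)‖ := rfl
    show ‖(x : H)‖ ≤ c⁻¹ * ‖T (x : H)‖
    calc ‖(x : H)‖ = c⁻¹ * (c * ‖(x : H)‖) := by field_simp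
      _ ≤ c⁻¹ * ‖T (x : H)‖ := mul_le_mul_of_nonneg_left this (by positivity)
  have hclosed : IsClosed (Set.range ⇑S) := hanti.isClosed_range S.uniformContinuous
  have heq : ((LinearMap.range (T : H →ₗ[ℂ] H) : Submodule ℂ H) : Set H) = Set.range ⇑S := by
    ext y
    simp only [SetLike.mem_coe, LinearMap.mem_range, Set.mem_range]
    constructor
    · rintro ⟨z, rfl⟩
      have hw : z - (orthogonalProjection N z : H) ∈ M :=
        sub_starProjection_mem_orthogonal z
      refine ⟨⟨z - (orthogonalProjection N z : H), hw⟩, ?_⟩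
      have hproj : T ((orthogonalProjection N z : H)) = 0 :=
        LinearMap.mem_ker.mp (orthogonalProjection N z).2
      show T (z - _) = T z
      rw [map_sub, hproj, sub_zero]
    · rintro ⟨m, rfl⟩
      exact ⟨(m : H), rfl⟩
  exact heq ▸ hclosed

/-- The sum of a closed subspace and a finite-dimensional subspace of its orthogonal
complement is closed. -/
lemma aux_sup_closed (R F : Submodule ℂ H) (hR : IsClosed (R : Set H))
    [FiniteDimensional ℂ F] (hRF : F ≤ Rᗮ) :
    IsClosed ((R ⊔ F : Submodule ℂ H) : Set H) := by
  haveI : CompleteSpace R := hR.completeSpace_coe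
  haveI : CompleteSpace F := FiniteDimensional.complete ℂ F
  set Φ : (R × F) →L[ℂ] H :=
    R.subtypeL.comp (ContinuousLinearMap.fst ℂ R F) +
      F.subtypeL.comp (ContinuousLinearMap.snd ℂ R F) with hΦ
  have hΦapp : ∀ p : R × F, Φ p = (p.1 : H) + (p.2 : H) := by
    intro p
    simp [hΦ, ContinuousLinearMap.add_apply, ContinuousLinearMap.comp_apply]
  have hanti : AntilipschitzWith 1 ⇑Φ := by
    apply ContinuousLinearMap.antilipschitz_of_bound
    intro p
    have hinner : ⟪(p.1 : H), (p.2 : H)⟫ = 0 :=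
      (Submodule.mem_orthogonal R ((p.2 : H))).mp (hRF p.2.2) (p.1 : H) p.1.2
    have hns : ‖(p.1 : H) + (p.2 : H)‖ ^ 2 = ‖(p.1 : H)‖ ^ 2 + ‖(p.2 : H)‖ ^ 2 := by
      have h := norm_add_sq_eq_norm_sq_add_norm_sq_of_inner_eq_zero ((p.1 : H)) ((p.2 : H)) hinner
      rw [pow_two, pow_two, pow_two]
      exact h
    have h1 : ‖(p.1 : H)‖ ≤ ‖(p.1 : H) + (p.2 : H)‖ := by
      refine le_of_pow_le_pow_left₀ (two_ne_zero) (norm_nonneg _) ?_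
      rw [hns]; linarith [sq_nonneg ‖(p.2 : H)‖]
    have h2 : ‖(p.2 : H)‖ ≤ ‖(p.1 : H) + (p.2 : H)‖ := by
      refine le_of_pow_le_pow_left₀ (two_ne_zero) (norm_nonneg _) ?_
      rw [hns]; linarith [sq_nonneg ‖(p.1 : H)‖]
    have hmax : ‖p‖ = max ‖(p.1 : H)‖ ‖(p.2 : H)‖ := Prod.norm_def p
    rw [hmax, hΦapp, NNReal.coe_one, one_mul]
    exact max_le h1 h2
  have hclosed : IsClosed (Set.range ⇑Φ) := hanti.isClosed_range Φ.uniformContinuous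
  have heq : ((R ⊔ F : Submodule ℂ H) : Set H) = Set.range ⇑Φ := by
    ext y
    simp only [SetLike.mem_coe, Set.mem_range]
    rw [Submodule.mem_sup]
    constructor
    · rintro ⟨a, ha, b, hb, rfl⟩
      exact ⟨(⟨a, ha⟩, ⟨b, hb⟩), rfl⟩
    · rintro ⟨p, rfl⟩
      exact ⟨(p.1 : H), p.1.2, (p.2 : H), p.2.2, rfl⟩
  rw [heq]
  exact hclosed

theorem stmt5' {H : Type*} [NormedAddCommGroup H] [InnerProductSpace ℂ H] [CompleteSpace H]
    (Pp Pm : H →L[ℂ] H) (hPp : Pp ∘L Pp = Pp) (hPm : Pm ∘L Pm = Pm)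
    (hK : IsCompactOperator ((Pp + Pm - 1 : H →L[ℂ] H))) :
    FiniteDimensional ℂ ↥(LinearMap.range (Pp : H →ₗ[ℂ] H) ⊓ LinearMap.range (Pm : H →ₗ[ℂ] H)) ∧
    IsClosed ((LinearMap.range (Pp : H →ₗ[ℂ] H) ⊔ LinearMap.range (Pm : H →ₗ[ℂ] H) : Submodule ℂ H) : Set H) ∧
    FiniteDimensional ℂ (H ⧸ (LinearMap.range (Pp : H →ₗ[ℂ] H) ⊔ LinearMap.range (Pm : H →ₗ[ℂ] H))) := by
  set K : H →L[ℂ] H := Pp + Pm - 1 with hKdef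
  set A := LinearMap.range (Pp : H →ₗ[ℂ] H) with hA
  set B := LinearMap.range (Pm : H →ₗ[ℂ] H) with hB
  have hPp' : ∀ x ∈ A, Pp x = x := by
    rintro x hx
    obtain ⟨y, rfl⟩ := hx
    conv_rhs => rw [← hPp]
    rfl
  have hPm' : ∀ x ∈ B, Pm x = x := by
    rintro x hx
    obtain ⟨y, rfl⟩ := hx
    conv_rhs => rw [← hPm]
    rfl
  have hAc : IsClosed (A : Set H) := by
    have hAk : A = LinearMap.ker ((1 - Pp : H →L[ℂ] H) : H →ₗ[ℂ] H) := by
      ext x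
      constructor
      · intro hx
        have h1 := hPp' x hx
        show x - Pp x = 0
        rw [h1, sub_self]
      · intro hx
        have h0 : x - Pp x = 0 := hx
        exact ⟨x, (sub_eq_zero.mp h0).symm⟩
    rw [hAk]
    exact ContinuousLinearMap.isClosed_ker _
  have hBc : IsClosed (B : Set H) := by
    have hBk : B = LinearMap.ker ((1 - Pm : H →L[ℂ] H) : H →ₗ[ℂ] H) := by
      ext x
      constructor
      · intro hx
        have h1 := hPm' x hx
        show x - Pm x = 0
        rw [h1, sub_self]
      · intro hx
        have h0 : x - Pm x = 0 := hx
        exact ⟨x, (sub_eq_zero.mp h0).symm⟩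
    rw [hBk]
    exact ContinuousLinearMap.isClosed_ker _
  -- Part 1 : A ⊓ B finite dimensional
  have hpart1 : FiniteDimensional ℂ ↥(A ⊓ B) := by
    refine aux_findim (K := K) hK (A ⊓ B) ?_ ?_
    · rw [Submodule.coe_inf]
      exact hAc.inter hBc
    · intro x hx
      obtain ⟨hxA, hxB⟩ := Submodule.mem_inf.mp hx
      show (Pp + Pm - 1) x = x
      simp [ContinuousLinearMap.sub_apply, ContinuousLinearMap.add_apply,
        hPp' x hxA, hPm' x hxB]
  -- the range of 1 + K = Pp + Pm
  have hTK : (1 : H →L[ℂ] H) + K = Pp + Pm := by rw [hKdef]; abel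
  set Rng := LinearMap.range (((1 : H →L[ℂ] H) + K : H →L[ℂ] H) : H →ₗ[ℂ] H) with hRng
  have hRclosed : IsClosed (Rng : Set H) := aux_range_closed hK
  have hRle : Rng ≤ A ⊔ B := by
    rintro y hy
    obtain ⟨z, rfl⟩ := hy
    have h1 : ((1 : H →L[ℂ] H) + K) z = Pp z + Pm z := by rw [hTK]; rfl
    rw [ContinuousLinearMap.coe_coe, h1]
    exact Submodule.add_mem_sup ⟨z, rfl⟩ ⟨z, rfl⟩
  have hOrth : FiniteDimensional ℂ ↥(Rngᗮ) := by
    refine aux_findim (K := -(ContinuousLinearMap.adjoint K))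
      (by simpa using (aux_adjoint_compact hK).neg) Rngᗮ
      (Submodule.isClosed_orthogonal _) ?_
    intro x hx
    set T : H →L[ℂ] H := 1 + K with hT
    set w := ContinuousLinearMap.adjoint T x with hw
    have h1 : ⟪w, w⟫ = ⟪x, T w⟫ := ContinuousLinearMap.adjoint_inner_left T w x
    have h2 : ⟪T w, x⟫ = 0 :=
      (Submodule.mem_orthogonal Rng x).mp hx (T w) ⟨w, rfl⟩
    have h3 : ⟪x, T w⟫ = 0 := by
      rw [← inner_conj_symm, h2, map_zero]
    have hw0 : w = 0 := inner_self_eq_zero.mp (h1.trans h3)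
    have hadj : w = x + ContinuousLinearMap.adjoint K x := by
      rw [hw, hT, map_add]
      congr 1
      have : (1 : H →L[ℂ] H) = ContinuousLinearMap.id ℂ H := rfl
      rw [this, ContinuousLinearMap.adjoint_id]
      rfl
    have : ContinuousLinearMap.adjoint K x = -x := by
      rw [hadj] at hw0
      exact eq_neg_of_add_eq_zero_right hw0
    simp [ContinuousLinearMap.neg_apply, this]
  haveI : CompleteSpace Rng := hRclosed.completeSpace_coe
  haveI hOrthI : FiniteDimensional ℂ ↥(Rngᗮ) := hOrth
  haveI hFfd : FiniteDimensional ℂ ↥((A ⊔ B) ⊓ Rngᗮ) :=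
    Submodule.finiteDimensional_of_le inf_le_right
  have hdecomp : A ⊔ B = Rng ⊔ ((A ⊔ B) ⊓ Rngᗮ) := by
    apply le_antisymm
    · intro s hs
      have hwmem : s - (orthogonalProjection Rng s : H) ∈ Rngᗮ :=
        sub_starProjection_mem_orthogonal s
      have hr : (orthogonalProjection Rng s : H) ∈ Rng := (orthogonalProjection Rng s).2
      have hsw : s - (orthogonalProjection Rng s : H) ∈ A ⊔ B :=
        Submodule.sub_mem _ hs (hRle hr)
      have hss : s = (orthogonalProjection Rng s : H) +
          (s - (orthogonalProjection Rng s : H)) := by abel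
      rw [hss]
      exact Submodule.add_mem_sup hr (Submodule.mem_inf.mpr ⟨hsw, hwmem⟩)
    · exact sup_le hRle inf_le_left
  have hABclosed : IsClosed ((A ⊔ B : Submodule ℂ H) : Set H) := by
    rw [hdecomp]
    exact aux_sup_closed Rng _ hRclosed inf_le_right
  haveI hQR : FiniteDimensional ℂ (H ⧸ Rng) := by
    have e := Submodule.quotientEquivOfIsCompl Rng Rngᗮ
      Rng.isCompl_orthogonal_of_hasOrthogonalProjection
    exact Module.Finite.equiv e.symm
  have hquot : FiniteDimensional ℂ (H ⧸ (A ⊔ B)) := by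
    have hle : Rng ≤ (A ⊔ B).comap (LinearMap.id) := by simpa using hRle
    set q := Submodule.mapQ Rng (A ⊔ B) LinearMap.id hle with hq
    have hsurj : Function.Surjective q := by
      intro y
      obtain ⟨z, rfl⟩ := Submodule.mkQ_surjective _ y
      exact ⟨Rng.mkQ z, by simp [hq, Submodule.mapQ_apply]⟩
    exact Module.Finite.of_surjective q hsurj
  exact ⟨hpart1, hABclosed, hquot⟩

end FredholmHelpers

/-- if P₊, P₋ are bounded idempotents with P₊ + P₋ − 1 compact, then
(im P₊, im P₋) is a Fredholm pair. -/
theorem stmt5 {H : Type*} [NormedAddCommGroup H] [InnerProductSpace ℂ H] [CompleteSpace H]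
    (Pp Pm : H →L[ℂ] H) (hPp : Pp ∘L Pp = Pp) (hPm : Pm ∘L Pm = Pm)
    (hK : IsCompactOperator ((Pp + Pm - 1 : H →L[ℂ] H))) :
    IsFredholmPair (LinearMap.range (Pp : H →ₗ[ℂ] H)) (LinearMap.range (Pm : H →ₗ[ℂ] H)) := by
  obtain ⟨h1, h2, h3⟩ := stmt5' Pp Pm hPp hPm hK
  exact ⟨h1, h2, h3⟩
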